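/- Let (X,d) be a compact metric space, T a homeomorphism, μ a T-invariant Borel probability measure, and f ∈ L²(X,μ). If f is an almost periodic function (the orbit {f∘Tⁿ : n∈ℤ} is precompact in L²(X,μ)), then μ has bounded complexity with respect to f̄_n(x,y) = (1/n)∑_{i=0}^{n−1}|f(Tⁱx)−f(Tⁱy)|: for every ε>0 there exists C∈ℕ such that for every n≥1 there is a finite set F ⊂ X with #F ≤ C and μ(⋃_{x∈F}{y : f̄_n(x,y)<ε}) > 1−ε. -/

import Mathlib

open MeasureTheory Filter Metric Set

/-- Birkhoff average of `|f(Tⁱx) - f(Tⁱy)|`. -/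
noncomputable def fbar {X : Type*} (T : X → X) (f : X → ℝ) (n : ℕ) (x y : X) : ℝ :=
  (∑ i ∈ Finset.range n, |f (T^[i] x) - f (T^[i] y)|) / n

set_option maxHeartbeats 1000000 in
theorem key_bounded_complexity {X : Type*} [MetricSpace X]
    [MeasurableSpace X] [BorelSpace X]
    (T : X ≃ₜ X) (μ : Measure X) [IsProbabilityMeasure μ]
    (hT : MeasurePreserving (⇑T) μ μ)
    (f : X → ℝ) (fL : Lp ℝ 2 μ) (hfL : (fL : X → ℝ) =ᵐ[μ] f)
    (U : Lp ℝ 2 μ ≃ₗᵢ[ℝ] Lp ℝ 2 μ)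
    (hU : ∀ g : Lp ℝ 2 μ, (U g : X → ℝ) =ᵐ[μ] fun x => g (T x))
    (hap : IsCompact (closure (Set.range fun n : ℤ => (U ^ n) fL)))
    (ε : ℝ) (hε : 0 < ε) (hε1 : ε ≤ 1) :
    ∃ C : ℕ, ∀ n : ℕ, 1 ≤ n → ∃ F : Finset X, F.card ≤ C ∧
      μ (⋃ x ∈ F, {y : X | fbar (⇑T) f n x y < ε}) > ENNReal.ofReal (1 - ε) := by
  classical
  haveI hXne : Nonempty X := by
    rcases isEmpty_or_nonempty X with h | h
    · exfalso
      have h1 : μ Set.univ = 1 := measure_univ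
      rw [Set.univ_eq_empty_iff.2 h] at h1
      simp at h1
    · exact h
  set δ : ℝ := ε ^ 2 / 24 with hδdef
  have hδ : 0 < δ := by positivity
  -- δ-net of the orbit
  have htb : TotallyBounded (Set.range fun n : ℤ => (U ^ n) fL) :=
    (hap.totallyBounded).subset subset_closure
  obtain ⟨t, htfin, htcov⟩ := totallyBounded_iff.1 htb δ hδ
  have hmem : ∀ i : ℕ, ∃ g ∈ t, dist ((U ^ i) fL) g < δ := by
    intro i
    have h1 : (U ^ i) fL ∈ Set.range fun n : ℤ => (U ^ n) fL := ⟨(i : ℤ), by show (U ^ (i:ℤ)) fL = _; rw [zpow_natCast]⟩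
    have h2 := htcov h1
    simpa using h2
  choose g hg hgd using hmem
  -- index type and map Φ
  set s : Finset (Lp ℝ 2 μ) := htfin.toFinset with hs
  set φfun : ↥s → X → ℝ := fun gg => ((gg : Lp ℝ 2 μ) : X → ℝ) with hφfun
  have hφm : ∀ gg : ↥s, Measurable (φfun gg) := fun gg => (Lp.stronglyMeasurable _).measurable
  set Φ : X → (↥s → ℝ) := fun x gg => φfun gg x with hΦ
  have hΦm : Measurable Φ := measurable_pi_lambda _ hφm
  set Gm : ℕ → ↥s := fun i => ⟨g i, htfin.mem_toFinset.2 (hg i)⟩ with hGm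
  -- measurable version of f
  set f' : X → ℝ := (fL : X → ℝ) with hf'
  have hf'm : Measurable f' := (Lp.stronglyMeasurable fL).measurable
  have hf'f : f' =ᵐ[μ] f := hfL
  -- a.e. identity
  have hae : ∀ i : ℕ, (((U ^ i) fL : Lp ℝ 2 μ) : X → ℝ) =ᵐ[μ] fun x => f ((⇑T)^[i] x) := by
    intro i
    induction i with
    | zero => simpa using hfL
    | succ i ih =>
      have h1 : (U ^ (i + 1)) fL = U ((U ^ i) fL) := by rw [pow_succ']; rfl
      rw [h1]
      refine (hU _).trans ?_
      have h2 : (fun x => (((U ^ i) fL : Lp ℝ 2 μ) : X → ℝ) (T x)) =ᵐ[μ]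
          fun x => f ((⇑T)^[i] (T x)) := hT.quasiMeasurePreserving.ae_eq_comp ih
      refine h2.trans ?_
      refine Filter.EventuallyEq.of_eq (funext fun x => ?_)
      rw [Function.iterate_succ_apply]
  have hae' : ∀ i : ℕ, (((U ^ i) fL : Lp ℝ 2 μ) : X → ℝ) =ᵐ[μ] fun x => f' ((⇑T)^[i] x) := by
    intro i
    refine (hae i).trans ?_
    have h1 := (hT.iterate i).quasiMeasurePreserving.ae_eq_comp hf'f
    exact h1.symm
  -- integral bounds for each i
  set ψ : ℕ → X → ℝ := fun i x => |(((U ^ i) fL - (g i) : Lp ℝ 2 μ) : X → ℝ) x| with hψ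
  have hψint : ∀ i, Integrable (ψ i) μ :=
    fun i => (MemLp.integrable (by norm_num) (Lp.memLp _)).abs
  have hψbound : ∀ i, ∫ x, ψ i x ∂μ ≤ δ := by
    intro i
    set h : Lp ℝ 2 μ := (U ^ i) fL - g i with hh
    have h2 : ∫ x, ψ i x ∂μ = ∫ x, ‖(h : X → ℝ) x‖ ∂μ := by
      simp [hψ, hh, Real.norm_eq_abs]
    rw [h2, integral_norm_eq_lintegral_enorm (Lp.aestronglyMeasurable h),
      ← eLpNorm_one_eq_lintegral_enorm]
    have h4 : eLpNorm (h : X → ℝ) 1 μ ≤ eLpNorm (h : X → ℝ) 2 μ :=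
      eLpNorm_le_eLpNorm_of_exponent_le (by norm_num) (Lp.aestronglyMeasurable h)
    have h6 : ‖h‖ < δ := by
      have h7 := hgd i
      rwa [dist_eq_norm] at h7
    calc (eLpNorm ((h : Lp ℝ 2 μ) : X → ℝ) 1 μ).toReal
        ≤ (eLpNorm ((h : Lp ℝ 2 μ) : X → ℝ) 2 μ).toReal :=
          ENNReal.toReal_mono (Lp.eLpNorm_ne_top h) h4
      _ = ‖h‖ := (Lp.norm_def h).symm
      _ ≤ δ := h6.le
  -- tightness: choose R
  set S : ℕ → Set X := fun R => Φ ⁻¹' Metric.closedBall (0 : ↥s → ℝ) R with hS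
  have hSm : ∀ R, MeasurableSet (S R) := fun R => hΦm measurableSet_closedBall
  have hSmono : Monotone S := by
    intro a b hab
    exact Set.preimage_mono (Metric.closedBall_subset_closedBall (by exact_mod_cast hab))
  have hSunion : ⋃ R, S R = Set.univ := by
    ext x
    simp only [Set.mem_iUnion, Set.mem_univ, iff_true, hS, Set.mem_preimage,
      Metric.mem_closedBall]
    obtain ⟨R, hR⟩ := exists_nat_ge (dist (Φ x) 0)
    exact ⟨R, hR⟩
  have htend : Tendsto (fun R => μ (S R)) atTop (nhds 1) := by
    have h1 := tendsto_measure_iUnion_atTop (μ := μ) hSmono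
    rw [hSunion, measure_univ] at h1
    exact h1
  have hlt1 : ENNReal.ofReal (1 - ε / 16) < 1 := by
    rw [← ENNReal.ofReal_one]
    rw [ENNReal.ofReal_lt_ofReal_iff one_pos]
    linarith
  obtain ⟨R, hR⟩ := (htend.eventually (eventually_gt_nhds hlt1)).exists
  -- cover the ball
  obtain ⟨c, hcsub, hcfin, hccov⟩ :=
    (isCompact_closedBall (0 : ↥s → ℝ) (R : ℝ)).finite_cover_balls
      (show (0:ℝ) < ε/6 by linarith)
  refine ⟨hcfin.toFinset.card, ?_⟩
  intro n hn
  have hnpos : (0:ℝ) < n := by exact_mod_cast hn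
  -- error function
  set err : X → ℝ :=
    fun x => (∑ i ∈ Finset.range n, |f' ((⇑T)^[i] x) - φfun (Gm i) x|) / n with herr
  have herrm : Measurable err := by
    apply Measurable.div_const
    apply Finset.measurable_sum
    intro i _
    exact ((hf'm.comp (hT.iterate i).measurable).sub (hφm (Gm i))).abs
  have herrae : err =ᵐ[μ] fun x => (∑ i ∈ Finset.range n, ψ i x) / n := by
    have hall : ∀ᵐ x ∂μ, ∀ i : ℕ, (((U ^ i) fL - g i : Lp ℝ 2 μ) : X → ℝ) x
        = f' ((⇑T)^[i] x) - φfun (Gm i) x := by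
      rw [MeasureTheory.ae_all_iff]
      intro i
      filter_upwards [Lp.coeFn_sub ((U ^ i) fL) (g i), hae' i] with x h1 h2
      rw [h1]
      simp only [Pi.sub_apply]
      rw [h2]
    filter_upwards [hall] with x hx
    simp only [herr, hψ]
    congr 1
    refine Finset.sum_congr rfl fun i _ => ?_
    rw [hx i]
  have herrint : Integrable err μ := by
    refine Integrable.congr ?_ herrae.symm
    exact ((integrable_finset_sum _ fun i _ => hψint i).div_const n)
  have herrbound : ∫ x, err x ∂μ ≤ δ := by
    rw [integral_congr_ae herrae]
    rw [integral_div, integral_finset_sum _ fun i _ => hψint i]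
    rw [div_le_iff₀ hnpos]
    calc ∑ i ∈ Finset.range n, ∫ x, ψ i x ∂μ ≤ ∑ _i ∈ Finset.range n, δ :=
        Finset.sum_le_sum fun i _ => hψbound i
      _ = n * δ := by simp [mul_comm]
      _ = δ * n := by ring
  have herrnn : ∀ x, 0 ≤ err x := fun x => by
    rw [herr]
    positivity
  -- Markov inequality
  have hMarkov : μ {x | ε / 3 ≤ err x} ≤ ENNReal.ofReal (ε / 8) := by
    have h1 : {x | ε / 3 ≤ err x}
        = {x | ENNReal.ofReal (ε/3) ≤ ENNReal.ofReal (err x)} := by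
      ext x
      simp only [Set.mem_setOf_eq]
      rw [ENNReal.ofReal_le_ofReal_iff (herrnn x)]
    rw [h1]
    calc μ {x | ENNReal.ofReal (ε/3) ≤ ENNReal.ofReal (err x)}
        ≤ (∫⁻ x, ENNReal.ofReal (err x) ∂μ) / ENNReal.ofReal (ε/3) :=
          meas_ge_le_lintegral_div (herrm.ennreal_ofReal.aemeasurable)
            (by simp only [ne_eq, ENNReal.ofReal_eq_zero, not_le]; linarith)
            ENNReal.ofReal_ne_top
      _ ≤ ENNReal.ofReal δ / ENNReal.ofReal (ε/3) := by
          apply ENNReal.div_le_div_right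
          rw [← ofReal_integral_eq_lintegral_ofReal herrint
            (Filter.Eventually.of_forall herrnn)]
          exact ENNReal.ofReal_le_ofReal herrbound
      _ = ENNReal.ofReal (δ / (ε/3)) := (ENNReal.ofReal_div_of_pos (by linarith)).symm
      _ = ENNReal.ofReal (ε/8) := by
          congr 1
          rw [hδdef]
          field_simp
          ring
  -- null set where f and f' disagree along the orbit
  set D : Set X := {x | ¬ f' x = f x} with hD
  have hDnull : μ D = 0 := ae_iff.1 hf'f
  set N : Set X := ⋃ i : ℕ, (⇑T)^[i] ⁻¹' D with hN
  have hNnull : μ N = 0 :=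
    measure_iUnion_null fun i => ((hT.iterate i).quasiMeasurePreserving).preimage_null hDnull
  set N' : Set X := toMeasurable μ N with hN'
  have hN'null : μ N' = 0 := by rw [hN', measure_toMeasurable]; exact hNnull
  have hN'm : MeasurableSet N' := measurableSet_toMeasurable μ N
  set A : Set X := {x | err x < ε / 3} with hA
  have hAm : MeasurableSet A := measurableSet_lt herrm measurable_const
  set G : Set X := (S R ∩ A) \ N' with hG
  have hGmeas : MeasurableSet G := ((hSm R).inter hAm).diff hN'm
  -- measure of G
  have hSsub : S R ⊆ G ∪ (Aᶜ ∪ N') := by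
    intro x hx
    by_cases h1 : x ∈ N'
    · exact Or.inr (Or.inr h1)
    by_cases h2 : x ∈ A
    · exact Or.inl ⟨⟨hx, h2⟩, h1⟩
    · exact Or.inr (Or.inl h2)
  have hAc : μ Aᶜ ≤ ENNReal.ofReal (ε/8) := by
    have h1 : Aᶜ = {x | ε/3 ≤ err x} := by
      ext x
      simp [hA, not_lt]
    rw [h1]
    exact hMarkov
  have hGtoReal : 1 - ε < (μ G).toReal := by
    have h1 : (1 : ℝ) - ε/16 < (μ (S R)).toReal :=
      (ENNReal.ofReal_lt_iff_lt_toReal (by linarith) (measure_ne_top μ _)).1 hR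
    have h2 : (μ Aᶜ).toReal ≤ ε/8 := ENNReal.toReal_le_of_le_ofReal (by linarith) hAc
    have h3 : μ (S R) ≤ μ G + (μ Aᶜ + μ N') := by
      calc μ (S R) ≤ μ (G ∪ (Aᶜ ∪ N')) := measure_mono hSsub
        _ ≤ μ G + μ (Aᶜ ∪ N') := measure_union_le _ _
        _ ≤ μ G + (μ Aᶜ + μ N') := add_le_add_right (measure_union_le _ _) _
    have h4 : (μ (S R)).toReal ≤ (μ G).toReal + ((μ Aᶜ).toReal + (μ N').toReal) := by
      rw [← ENNReal.toReal_add (measure_ne_top μ _) (measure_ne_top μ _),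
        ← ENNReal.toReal_add (measure_ne_top μ _)
          (ENNReal.add_ne_top.2 ⟨measure_ne_top μ _, measure_ne_top μ _⟩)]
      exact ENNReal.toReal_mono
        (ENNReal.add_ne_top.2 ⟨measure_ne_top μ _,
          ENNReal.add_ne_top.2 ⟨measure_ne_top μ _, measure_ne_top μ _⟩⟩) h3
    have h5 : (μ N').toReal = 0 := by rw [hN'null]; simp
    linarith
  -- choice of centers
  set pick : (↥s → ℝ) → X := fun z =>
    if h : (Φ ⁻¹' Metric.ball z (ε/6) ∩ G).Nonempty then h.choose
    else Classical.arbitrary X with hpick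
  refine ⟨hcfin.toFinset.image pick, Finset.card_image_le, ?_⟩
  have hGsub : G ⊆ ⋃ x ∈ hcfin.toFinset.image pick, {y : X | fbar (⇑T) f n x y < ε} := by
    intro y hy
    have hyS : Φ y ∈ Metric.closedBall (0 : ↥s → ℝ) R := hy.1.1
    obtain ⟨z, hz, hzy⟩ : ∃ z ∈ c, Φ y ∈ Metric.ball z (ε/6) := by
      have h1 := hccov hyS
      simpa using h1
    have hne : (Φ ⁻¹' Metric.ball z (ε/6) ∩ G).Nonempty := ⟨y, hzy, hy⟩
    have hxmem : pick z ∈ Φ ⁻¹' Metric.ball z (ε/6) ∩ G := by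
      rw [hpick]
      simp only
      rw [dif_pos hne]
      exact hne.choose_spec
    set x : X := pick z with hx
    refine Set.mem_iUnion₂.2 ⟨x, Finset.mem_image.2 ⟨z, hcfin.mem_toFinset.2 hz, rfl⟩, ?_⟩
    show fbar (⇑T) f n x y < ε
    have hxnN : ∀ i : ℕ, f ((⇑T)^[i] x) = f' ((⇑T)^[i] x) := by
      intro i
      have h1 : x ∉ N := fun hc => hxmem.2.2 (subset_toMeasurable μ N hc)
      rw [hN] at h1
      simp only [Set.mem_iUnion, Set.mem_preimage, not_exists] at h1
      have h2 := h1 i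
      rw [hD] at h2
      simp only [Set.mem_setOf_eq, not_not] at h2
      exact h2.symm
    have hynN : ∀ i : ℕ, f ((⇑T)^[i] y) = f' ((⇑T)^[i] y) := by
      intro i
      have h1 : y ∉ N := fun hc => hy.2 (subset_toMeasurable μ N hc)
      rw [hN] at h1
      simp only [Set.mem_iUnion, Set.mem_preimage, not_exists] at h1
      have h2 := h1 i
      rw [hD] at h2
      simp only [Set.mem_setOf_eq, not_not] at h2
      exact h2.symm
    have hdist : dist (Φ x) (Φ y) < ε/3 := by
      have h1 : dist (Φ x) z < ε/6 := hxmem.1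
      have h2 : dist (Φ y) z < ε/6 := hzy
      calc dist (Φ x) (Φ y) ≤ dist (Φ x) z + dist z (Φ y) := dist_triangle _ _ _
        _ = dist (Φ x) z + dist (Φ y) z := by rw [dist_comm z]
        _ < ε/3 := by linarith
    have hxA : err x < ε/3 := hxmem.2.1.2
    have hyA : err y < ε/3 := hy.1.2
    rw [fbar, div_lt_iff₀ hnpos]
    have hmid : ∀ i : ℕ, |φfun (Gm i) x - φfun (Gm i) y| ≤ ε/3 := by
      intro i
      have h1 := dist_le_pi_dist (Φ x) (Φ y) (Gm i)
      rw [Real.dist_eq] at h1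
      exact h1.trans hdist.le
    have hterm : ∀ i ∈ Finset.range n,
        |f ((⇑T)^[i] x) - f ((⇑T)^[i] y)| ≤
          |f' ((⇑T)^[i] x) - φfun (Gm i) x| + |φfun (Gm i) x - φfun (Gm i) y|
            + |f' ((⇑T)^[i] y) - φfun (Gm i) y| := by
      intro i _
      rw [hxnN i, hynN i]
      have h1 := abs_sub_le (f' ((⇑T)^[i] x)) (φfun (Gm i) x) (f' ((⇑T)^[i] y))
      have h2 := abs_sub_le (φfun (Gm i) x) (φfun (Gm i) y) (f' ((⇑T)^[i] y))
      have h3 := abs_sub_comm (φfun (Gm i) y) (f' ((⇑T)^[i] y))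
      linarith [abs_nonneg (φfun (Gm i) y - f' ((⇑T)^[i] y))]
    have hsx : (∑ i ∈ Finset.range n, |f' ((⇑T)^[i] x) - φfun (Gm i) x|) = n * err x := by
      rw [herr]
      field_simp
    have hsy : (∑ i ∈ Finset.range n, |f' ((⇑T)^[i] y) - φfun (Gm i) y|) = n * err y := by
      rw [herr]
      field_simp
    calc ∑ i ∈ Finset.range n, |f ((⇑T)^[i] x) - f ((⇑T)^[i] y)|
        ≤ ∑ i ∈ Finset.range n, (|f' ((⇑T)^[i] x) - φfun (Gm i) x|
            + |φfun (Gm i) x - φfun (Gm i) y| + |f' ((⇑T)^[i] y) - φfun (Gm i) y|) :=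
          Finset.sum_le_sum hterm
      _ = (∑ i ∈ Finset.range n, |f' ((⇑T)^[i] x) - φfun (Gm i) x|)
          + (∑ i ∈ Finset.range n, |φfun (Gm i) x - φfun (Gm i) y|)
          + (∑ i ∈ Finset.range n, |f' ((⇑T)^[i] y) - φfun (Gm i) y|) := by
          rw [Finset.sum_add_distrib, Finset.sum_add_distrib]
      _ ≤ n * err x + n * (ε/3) + n * err y := by
          have hm : (∑ i ∈ Finset.range n, |φfun (Gm i) x - φfun (Gm i) y|)
              ≤ n * (ε/3) := by
            calc (∑ i ∈ Finset.range n, |φfun (Gm i) x - φfun (Gm i) y|)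
                ≤ ∑ _i ∈ Finset.range n, (ε/3) := Finset.sum_le_sum fun i _ => hmid i
              _ = n * (ε/3) := by simp [mul_comm]
          rw [hsx, hsy]
          linarith
      _ < ε * n := by nlinarith
  calc ENNReal.ofReal (1 - ε)
      < μ G := (ENNReal.ofReal_lt_iff_lt_toReal (by linarith) (measure_ne_top μ _)).2 hGtoReal
    _ ≤ μ (⋃ x ∈ hcfin.toFinset.image pick, {y : X | fbar (⇑T) f n x y < ε}) :=
        measure_mono hGsub

theorem stmt12 {X : Type*} [MetricSpace X] [CompactSpace X]
    [MeasurableSpace X] [BorelSpace X]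
    (T : X ≃ₜ X) (μ : Measure X) [IsProbabilityMeasure μ]
    (hT : MeasurePreserving (⇑T) μ μ)
    (f : X → ℝ) (fL : Lp ℝ 2 μ) (hfL : (fL : X → ℝ) =ᵐ[μ] f)
    (U : Lp ℝ 2 μ ≃ₗᵢ[ℝ] Lp ℝ 2 μ)
    (hU : ∀ g : Lp ℝ 2 μ, (U g : X → ℝ) =ᵐ[μ] fun x => g (T x))
    (hap : IsCompact (closure (Set.range fun n : ℤ => (U ^ n) fL))) :
    ∀ ε : ℝ, 0 < ε → ∃ C : ℕ, ∀ n : ℕ, 1 ≤ n → ∃ F : Finset X,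
      F.card ≤ C ∧
      μ (⋃ x ∈ F, {y : X | fbar (⇑T) f n x y < ε}) > ENNReal.ofReal (1 - ε) := by
  intro ε hε
  obtain ⟨C, hC⟩ := key_bounded_complexity T μ hT f fL hfL U hU hap (min ε 1)
    (lt_min hε one_pos) (min_le_right _ _)
  refine ⟨C, fun n hn => ?_⟩
  obtain ⟨F, hF1, hF2⟩ := hC n hn
  refine ⟨F, hF1, ?_⟩
  calc ENNReal.ofReal (1 - ε) ≤ ENNReal.ofReal (1 - min ε 1) :=
        ENNReal.ofReal_le_ofReal (by linarith [min_le_left ε 1])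
    _ < μ (⋃ x ∈ F, {y : X | fbar (⇑T) f n x y < min ε 1}) := hF2
    _ ≤ μ (⋃ x ∈ F, {y : X | fbar (⇑T) f n x y < ε}) := by
        apply measure_mono
        refine Set.iUnion₂_mono fun x _ => ?_
        intro y hy
        simp only [Set.mem_setOf_eq] at hy ⊢
        exact lt_of_lt_of_le hy (min_le_left _ _)
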